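/- Let A, B be unital *-algebras and Ψ: B⊗A → A⊗B a normal twist satisfying the two hexagon conditions, such that Ψ' := Ψ∘τ is *-compatible, i.e., (∗_A⊗∗_B) = Ψ'∘(∗_A⊗∗_B)∘Ψ'. Then ∗_Ψ := Ψ∘τ∘(∗_A⊗∗_B) is an involution on the twisted tensor product algebra A⊗_Ψ B: it squares to the identity and is anti-multiplicative for the twisted product. -/

import Mathlib

open TensorProduct

set_option maxHeartbeats 1000000
set_option synthInstance.maxHeartbeats 200000

/-- The twisted multiplication m_Ψ := (m_A ⊗ m_B)(id_A ⊗ Ψ ⊗ id_B) on A ⊗ B. -/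
noncomputable def twistedMul (A B : Type*) [Ring A] [Ring B]
    [Algebra ℂ A] [Algebra ℂ B] (Ψ : B ⊗[ℂ] A →ₗ[ℂ] A ⊗[ℂ] B) :
    (A ⊗[ℂ] B) ⊗[ℂ] (A ⊗[ℂ] B) →ₗ[ℂ] A ⊗[ℂ] B :=
  TensorProduct.map (LinearMap.mul' ℂ A) (LinearMap.mul' ℂ B)
    ∘ₗ (TensorProduct.assoc ℂ A A (B ⊗[ℂ] B)).symm.toLinearMap
    ∘ₗ TensorProduct.map LinearMap.id (TensorProduct.assoc ℂ A B B).toLinearMap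
    ∘ₗ TensorProduct.map LinearMap.id (TensorProduct.map Ψ LinearMap.id)
    ∘ₗ TensorProduct.map LinearMap.id (TensorProduct.assoc ℂ B A B).symm.toLinearMap
    ∘ₗ (TensorProduct.assoc ℂ A B (A ⊗[ℂ] B)).toLinearMap

/-- if A, B are unital *-algebras and Ψ is a normal twist satisfying the
hexagon conditions, such that Ψ' := Ψ∘τ is *-compatible (i.e. ∗⊗ = Ψ'∘∗⊗∘Ψ' where
∗⊗ = ∗_A ⊗ ∗_B), then ∗_Ψ := Ψ∘τ∘∗⊗ is an involution of the twisted tensor product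
algebra A ⊗_Ψ B: it squares to the identity and is anti-multiplicative for m_Ψ. -/
theorem stmt8 (A B : Type*) [Ring A] [Ring B] [Algebra ℂ A] [Algebra ℂ B]
    (sA : A → A) (sB : B → B)
    -- ∗_A is a conjugate-linear anti-multiplicative involution, similarly ∗_B
    (hsA_add : ∀ a a', sA (a + a') = sA a + sA a')
    (hsA_smul : ∀ (c : ℂ) a, sA (c • a) = (starRingEnd ℂ c) • sA a)
    (hsA_mul : ∀ a a', sA (a * a') = sA a' * sA a)
    (hsA_inv : ∀ a, sA (sA a) = a) (hsA_one : sA 1 = 1)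
    (hsB_add : ∀ b b', sB (b + b') = sB b + sB b')
    (hsB_smul : ∀ (c : ℂ) b, sB (c • b) = (starRingEnd ℂ c) • sB b)
    (hsB_mul : ∀ b b', sB (b * b') = sB b' * sB b)
    (hsB_inv : ∀ b, sB (sB b) = b) (hsB_one : sB 1 = 1)
    -- the map ∗_A ⊗ ∗_B on A ⊗ B
    (sT : A ⊗[ℂ] B → A ⊗[ℂ] B)
    (hsT_add : ∀ u v, sT (u + v) = sT u + sT v)
    (hsT_tmul : ∀ (a : A) (b : B), sT (a ⊗ₜ[ℂ] b) = sA a ⊗ₜ[ℂ] sB b)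
    (Ψ : B ⊗[ℂ] A →ₗ[ℂ] A ⊗[ℂ] B)
    -- normality
    (hN1 : ∀ b : B, Ψ (b ⊗ₜ[ℂ] (1 : A)) = (1 : A) ⊗ₜ[ℂ] b)
    (hN2 : ∀ a : A, Ψ ((1 : B) ⊗ₜ[ℂ] a) = a ⊗ₜ[ℂ] (1 : B))
    -- hexagon conditions
    (hHex1 :
      (TensorProduct.map (LinearMap.id : A →ₗ[ℂ] A) (LinearMap.mul' ℂ B))
        ∘ₗ (TensorProduct.assoc ℂ A B B).toLinearMap
        ∘ₗ TensorProduct.map Ψ LinearMap.id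
        ∘ₗ (TensorProduct.assoc ℂ B A B).symm.toLinearMap
        ∘ₗ TensorProduct.map LinearMap.id Ψ
      = Ψ ∘ₗ TensorProduct.map (LinearMap.mul' ℂ B) LinearMap.id
          ∘ₗ (TensorProduct.assoc ℂ B B A).symm.toLinearMap)
    (hHex2 :
      (TensorProduct.map (LinearMap.mul' ℂ A) (LinearMap.id : B →ₗ[ℂ] B))
        ∘ₗ (TensorProduct.assoc ℂ A A B).symm.toLinearMap
        ∘ₗ TensorProduct.map LinearMap.id Ψ
        ∘ₗ (TensorProduct.assoc ℂ A B A).toLinearMap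
        ∘ₗ TensorProduct.map Ψ LinearMap.id
      = Ψ ∘ₗ TensorProduct.map LinearMap.id (LinearMap.mul' ℂ A)
          ∘ₗ (TensorProduct.assoc ℂ B A A).toLinearMap)
    -- Ψ' := Ψ ∘ τ and the *-compatibility condition ∗⊗ = Ψ'∘∗⊗∘Ψ'
    (Ψ' : A ⊗[ℂ] B → A ⊗[ℂ] B)
    (hΨ' : ∀ u, Ψ' u = Ψ ((TensorProduct.comm ℂ A B) u))
    (hcompat : ∀ u, sT u = Ψ' (sT (Ψ' u)))
    -- ∗_Ψ := Ψ' ∘ ∗⊗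
    (starΨ : A ⊗[ℂ] B → A ⊗[ℂ] B)
    (hstarΨ : ∀ u, starΨ u = Ψ' (sT u)) :
    (∀ u, starΨ (starΨ u) = u) ∧
    (∀ u v : A ⊗[ℂ] B,
      starΨ (twistedMul A B Ψ (u ⊗ₜ[ℂ] v)) =
        twistedMul A B Ψ (starΨ v ⊗ₜ[ℂ] starΨ u)) := by
  have hsT_zero : sT 0 = 0 := by
    have h := hsT_add 0 0
    rw [add_zero] at h
    exact (right_eq_add.mp h)
  have hsTsT : ∀ u, sT (sT u) = u := by
    intro u
    induction u using TensorProduct.induction_on with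
    | zero => rw [hsT_zero, hsT_zero]
    | tmul a b => rw [hsT_tmul, hsT_tmul, hsA_inv, hsB_inv]
    | add x y hx hy => rw [hsT_add, hsT_add, hx, hy]
  have part1 : ∀ u, starΨ (starΨ u) = u := by
    intro u
    rw [hstarΨ, hstarΨ, ← hcompat, hsTsT]
  refine ⟨part1, ?_⟩
  -- auxiliary (plain-function) maps coming from the hexagon identities
  set Cf : B → A ⊗[ℂ] B → A ⊗[ℂ] B := fun β z =>
    (TensorProduct.map (LinearMap.id : A →ₗ[ℂ] A) (LinearMap.mul' ℂ B))
      ((TensorProduct.assoc ℂ A B B)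
        ((TensorProduct.map Ψ (LinearMap.id : B →ₗ[ℂ] B))
          ((TensorProduct.assoc ℂ B A B).symm (β ⊗ₜ[ℂ] z)))) with hCf
  set Df : A → A ⊗[ℂ] B → A ⊗[ℂ] B := fun α z =>
    (TensorProduct.map (LinearMap.mul' ℂ A) (LinearMap.id : B →ₗ[ℂ] B))
      ((TensorProduct.assoc ℂ A A B).symm
        ((TensorProduct.map (LinearMap.id : A →ₗ[ℂ] A) Ψ)
          ((TensorProduct.assoc ℂ A B A) (z ⊗ₜ[ℂ] α)))) with hDf
  have hexC : ∀ (β b : B) (a : A), Ψ ((β * b) ⊗ₜ[ℂ] a) = Cf β (Ψ (b ⊗ₜ[ℂ] a)) := by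
    intro β b a
    have h := LinearMap.congr_fun hHex1 (β ⊗ₜ[ℂ] (b ⊗ₜ[ℂ] a))
    simp only [LinearMap.coe_comp, Function.comp_apply, LinearEquiv.coe_coe,
      TensorProduct.map_tmul, LinearMap.id_coe, id_eq, TensorProduct.assoc_symm_tmul,
      LinearMap.mul'_apply] at h
    simp only [hCf]
    exact h.symm
  have hexD : ∀ (b : B) (a α : A), Ψ (b ⊗ₜ[ℂ] (a * α)) = Df α (Ψ (b ⊗ₜ[ℂ] a)) := by
    intro b a α
    have h := LinearMap.congr_fun hHex2 ((b ⊗ₜ[ℂ] a) ⊗ₜ[ℂ] α)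
    simp only [LinearMap.coe_comp, Function.comp_apply, LinearEquiv.coe_coe,
      TensorProduct.map_tmul, LinearMap.id_coe, id_eq, TensorProduct.assoc_tmul,
      LinearMap.mul'_apply] at h
    simp only [hDf]
    exact h.symm
  -- the linear map z ↦ m_Ψ(Ψ(β⊗u) ⊗ Ψ(v⊗α)) of z = u⊗v
  set Tf : B → A → A ⊗[ℂ] B →ₗ[ℂ] A ⊗[ℂ] B := fun β α =>
    (twistedMul A B Ψ) ∘ₗ
      (TensorProduct.map (Ψ ∘ₗ TensorProduct.mk ℂ B A β)
        (Ψ ∘ₗ (TensorProduct.mk ℂ B A).flip α)) with hTf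
  have hTf_tmul : ∀ (β : B) (α : A) (u : A) (v : B),
      Tf β α (u ⊗ₜ[ℂ] v) = twistedMul A B Ψ ((Ψ (β ⊗ₜ[ℂ] u)) ⊗ₜ[ℂ] (Ψ (v ⊗ₜ[ℂ] α))) := by
    intro β α u v
    simp only [hTf, LinearMap.coe_comp, Function.comp_apply, TensorProduct.map_tmul,
      TensorProduct.mk_apply, LinearMap.flip_apply]
  -- unfolding twistedMul at a (pure ⊗ entangled) argument
  have tm_eq : ∀ (p : A) (q : B) (z : A ⊗[ℂ] B),
      twistedMul A B Ψ ((p ⊗ₜ[ℂ] q) ⊗ₜ[ℂ] z) =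
        (TensorProduct.map (LinearMap.mul' ℂ A) (LinearMap.mul' ℂ B))
          ((TensorProduct.assoc ℂ A A (B ⊗[ℂ] B)).symm
            (p ⊗ₜ[ℂ] ((TensorProduct.assoc ℂ A B B)
              ((TensorProduct.map Ψ (LinearMap.id : B →ₗ[ℂ] B))
                ((TensorProduct.assoc ℂ B A B).symm (q ⊗ₜ[ℂ] z)))))) := by
    intro p q z
    simp only [twistedMul, LinearMap.coe_comp, Function.comp_apply, LinearEquiv.coe_coe,
      TensorProduct.assoc_tmul, TensorProduct.map_tmul, LinearMap.id_coe, id_eq]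
  have dc4 : ∀ (p : A) (s : B) (z : A ⊗[ℂ] B),
      (TensorProduct.map (LinearMap.mul' ℂ A) (LinearMap.id : B →ₗ[ℂ] B))
        ((TensorProduct.assoc ℂ A A B).symm
          (p ⊗ₜ[ℂ] ((TensorProduct.map (LinearMap.id : A →ₗ[ℂ] A) (LinearMap.mul' ℂ B))
            ((TensorProduct.assoc ℂ A B B) (z ⊗ₜ[ℂ] s))))) =
      (TensorProduct.map (LinearMap.mul' ℂ A) (LinearMap.mul' ℂ B))
        ((TensorProduct.assoc ℂ A A (B ⊗[ℂ] B)).symm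
          (p ⊗ₜ[ℂ] ((TensorProduct.assoc ℂ A B B) (z ⊗ₜ[ℂ] s)))) := by
    intro p s z
    induction z using TensorProduct.induction_on with
    | zero =>
      simp only [zero_tmul, map_zero, tmul_zero]
    | tmul x y =>
      simp only [TensorProduct.assoc_tmul, TensorProduct.map_tmul, LinearMap.id_coe,
        id_eq, TensorProduct.assoc_symm_tmul, LinearMap.mul'_apply]
    | add x y hx hy =>
      simp only [add_tmul, map_add, tmul_add] at *
      rw [hx, hy]
  have dc3 : ∀ (p : A) (q : B) (z : A ⊗[ℂ] B),
      (TensorProduct.map (LinearMap.mul' ℂ A) (LinearMap.id : B →ₗ[ℂ] B))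
        ((TensorProduct.assoc ℂ A A B).symm (p ⊗ₜ[ℂ] Cf q z)) =
      twistedMul A B Ψ ((p ⊗ₜ[ℂ] q) ⊗ₜ[ℂ] z) := by
    intro p q z
    induction z using TensorProduct.induction_on with
    | zero =>
      simp only [hCf, tmul_zero, map_zero]
    | tmul r s =>
      simp only [hCf, TensorProduct.assoc_symm_tmul, TensorProduct.map_tmul,
        LinearMap.id_coe, id_eq]
      rw [dc4, tm_eq]
      simp only [TensorProduct.assoc_symm_tmul, TensorProduct.map_tmul,
        LinearMap.id_coe, id_eq]
    | add x y hx hy =>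
      have hCadd : Cf q (x + y) = Cf q x + Cf q y := by
        simp only [hCf, tmul_add, map_add]
      rw [hCadd, tmul_add, map_add, map_add, hx, hy, tmul_add, map_add]
  have dc2 : ∀ (z : A ⊗[ℂ] B) (v : B) (α : A),
      Df α ((TensorProduct.map (LinearMap.id : A →ₗ[ℂ] A) (LinearMap.mul' ℂ B))
        ((TensorProduct.assoc ℂ A B B) (z ⊗ₜ[ℂ] v))) =
      twistedMul A B Ψ (z ⊗ₜ[ℂ] Ψ (v ⊗ₜ[ℂ] α)) := by
    intro z v α
    induction z using TensorProduct.induction_on with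
    | zero =>
      simp only [hDf, zero_tmul, map_zero, tmul_zero]
    | tmul p q =>
      simp only [hDf, TensorProduct.assoc_tmul, TensorProduct.map_tmul,
        LinearMap.id_coe, id_eq, LinearMap.mul'_apply]
      rw [hexC q v α]
      exact dc3 p q (Ψ (v ⊗ₜ[ℂ] α))
    | add x y hx hy =>
      have hDadd : ∀ w w', Df α (w + w') = Df α w + Df α w' := by
        intro w w'
        simp only [hDf, add_tmul, map_add]
      rw [add_tmul, map_add, map_add, hDadd, hx, hy, add_tmul, map_add]
  have dc : ∀ (β : B) (α : A) (z : A ⊗[ℂ] B), Df α (Cf β z) = Tf β α z := by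
    intro β α z
    induction z using TensorProduct.induction_on with
    | zero =>
      simp only [hCf, hDf, tmul_zero, zero_tmul, map_zero]
    | tmul u v =>
      simp only [hCf, TensorProduct.assoc_symm_tmul, TensorProduct.map_tmul,
        LinearMap.id_coe, id_eq]
      rw [dc2 (Ψ (β ⊗ₜ[ℂ] u)) v α, hTf_tmul]
    | add x y hx hy =>
      have hCadd : Cf β (x + y) = Cf β x + Cf β y := by
        simp only [hCf, tmul_add, map_add]
      have hDadd : ∀ w w', Df α (w + w') = Df α w + Df α w' := by
        intro w w'
        simp only [hDf, add_tmul, map_add]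
      rw [hCadd, hDadd, hx, hy, map_add]
  -- the key lemma: Ψ ∘ (mulLeft β ⊗ mulRight α) = Tf β α ∘ Ψ
  have keyK : ∀ (β : B) (α : A) (w : B ⊗[ℂ] A),
      Ψ ((TensorProduct.map (LinearMap.mulLeft ℂ β) (LinearMap.mulRight ℂ α)) w) =
      Tf β α (Ψ w) := by
    intro β α w
    induction w using TensorProduct.induction_on with
    | zero => simp only [map_zero]
    | tmul b a =>
      simp only [TensorProduct.map_tmul, LinearMap.mulLeft_apply, LinearMap.mulRight_apply]
      rw [hexD (β * b) a α, hexC β b a, dc]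
    | add x y hx hy => rw [map_add, map_add, map_add, map_add, hx, hy]
  -- sT and comm applied to the twisted product of pure tensors
  have lemL1 : ∀ (a : A) (d : B) (z : A ⊗[ℂ] B),
      (TensorProduct.comm ℂ A B)
        (sT ((TensorProduct.map (LinearMap.mul' ℂ A) (LinearMap.mul' ℂ B))
          ((TensorProduct.assoc ℂ A A (B ⊗[ℂ] B)).symm
            (a ⊗ₜ[ℂ] ((TensorProduct.assoc ℂ A B B) (z ⊗ₜ[ℂ] d)))))) =
      (TensorProduct.map (LinearMap.mulLeft ℂ (sB d)) (LinearMap.mulRight ℂ (sA a)))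
        ((TensorProduct.comm ℂ A B) (sT z)) := by
    intro a d z
    induction z using TensorProduct.induction_on with
    | zero =>
      simp only [zero_tmul, map_zero, tmul_zero, hsT_zero]
    | tmul x y =>
      simp only [TensorProduct.assoc_tmul, TensorProduct.assoc_symm_tmul,
        TensorProduct.map_tmul, LinearMap.mul'_apply, hsT_tmul, hsA_mul, hsB_mul,
        TensorProduct.comm_tmul, LinearMap.mulLeft_apply, LinearMap.mulRight_apply]
    | add x y hx hy =>
      rw [add_tmul, map_add, tmul_add, map_add, map_add, hsT_add, map_add,
        hsT_add, map_add, map_add, hx, hy]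
  -- consequence of *-compatibility
  have compat' : ∀ (b : B) (c : A),
      Ψ ((TensorProduct.comm ℂ A B) (sT (Ψ (b ⊗ₜ[ℂ] c)))) = sA c ⊗ₜ[ℂ] sB b := by
    intro b c
    have h := hcompat (c ⊗ₜ[ℂ] b)
    rw [hsT_tmul, hΨ' (c ⊗ₜ[ℂ] b), TensorProduct.comm_tmul,
      hΨ' (sT (Ψ (b ⊗ₜ[ℂ] c)))] at h
    exact h.symm
  -- additivity of starΨ
  have hstar_zero : starΨ 0 = 0 := by
    rw [hstarΨ, hsT_zero, hΨ', map_zero, map_zero]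
  have hstar_add : ∀ x y, starΨ (x + y) = starΨ x + starΨ y := by
    intro x y
    rw [hstarΨ, hstarΨ, hstarΨ, hsT_add, hΨ', hΨ', hΨ', map_add, map_add]
  -- the pure-tensor case of anti-multiplicativity
  have main_pure : ∀ (a : A) (b : B) (c : A) (d : B),
      starΨ (twistedMul A B Ψ ((a ⊗ₜ[ℂ] b) ⊗ₜ[ℂ] (c ⊗ₜ[ℂ] d))) =
      twistedMul A B Ψ (starΨ (c ⊗ₜ[ℂ] d) ⊗ₜ[ℂ] starΨ (a ⊗ₜ[ℂ] b)) := by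
    intro a b c d
    have htm : twistedMul A B Ψ ((a ⊗ₜ[ℂ] b) ⊗ₜ[ℂ] (c ⊗ₜ[ℂ] d)) =
        (TensorProduct.map (LinearMap.mul' ℂ A) (LinearMap.mul' ℂ B))
          ((TensorProduct.assoc ℂ A A (B ⊗[ℂ] B)).symm
            (a ⊗ₜ[ℂ] ((TensorProduct.assoc ℂ A B B) ((Ψ (b ⊗ₜ[ℂ] c)) ⊗ₜ[ℂ] d)))) := by
      simp only [twistedMul, LinearMap.coe_comp, Function.comp_apply, LinearEquiv.coe_coe,
        TensorProduct.assoc_tmul, TensorProduct.assoc_symm_tmul, TensorProduct.map_tmul,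
        LinearMap.id_coe, id_eq]
    rw [hstarΨ, hΨ', htm, lemL1 a d (Ψ (b ⊗ₜ[ℂ] c)),
      keyK (sB d) (sA a) ((TensorProduct.comm ℂ A B) (sT (Ψ (b ⊗ₜ[ℂ] c)))),
      compat' b c, hTf_tmul]
    rw [hstarΨ (c ⊗ₜ[ℂ] d), hΨ', hsT_tmul, TensorProduct.comm_tmul,
      hstarΨ (a ⊗ₜ[ℂ] b), hΨ', hsT_tmul, TensorProduct.comm_tmul]
  -- reduce to pure tensors
  intro u v
  induction u using TensorProduct.induction_on with
  | zero =>
    simp only [zero_tmul, tmul_zero, map_zero, hstar_zero]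
  | tmul a b =>
    induction v using TensorProduct.induction_on with
    | zero =>
      simp only [zero_tmul, tmul_zero, map_zero, hstar_zero]
    | tmul c d => exact main_pure a b c d
    | add x y hx hy =>
      rw [tmul_add, map_add, hstar_add, hx, hy, hstar_add, add_tmul, map_add]
  | add x y hx hy =>
    rw [add_tmul, map_add, hstar_add, hx, hy, hstar_add, tmul_add, map_add]
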